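/- arXiv:math/0612113 — 2 statements merged into one kernel-verified Lean document; each statement's English description precedes it below -/
import Mathlib

section
/- For each i with 2 ≤ i ≤ d, the polynomial z_i := Σ_{k=0}^{i−2} (−1)^k · C(i,k) · x_{i−k} · x_1^k · t^{i−k−1} + (i−1)·(−1)^{i+1}·x_1^i is annihilated by the derivation D_1 = t·∂/∂x_1 + 2x_1·∂/∂x_2 + ... + d·x_{d−1}·∂/∂x_d. -/
open MvPolynomial
open Fin.NatCast

/-- The derivation `D₁ = Σ_{j=1}^{d} j·x_{j-1}·∂/∂x_j` on `ℂ[t, x_1, …, x_d]`,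
with variable `0` playing the role of `t = x_0`. -/
noncomputable def D1 (d : ℕ) (f : MvPolynomial (Fin (d+1)) ℂ) : MvPolynomial (Fin (d+1)) ℂ :=
  ∑ j ∈ Finset.range d, (((j+1 : ℕ)) : ℂ) •
    (X ((j : ℕ) : Fin (d+1)) * pderiv (((j+1 : ℕ)) : Fin (d+1)) f)

/-- The semi-invariant
`z_i = Σ_{k=0}^{i-2} (-1)^k C(i,k) x_{i-k} x_1^k t^{i-k-1} + (i-1)(-1)^{i+1} x_1^i`. -/
noncomputable def z (d i : ℕ) : MvPolynomial (Fin (d+1)) ℂ :=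
  (∑ k ∈ Finset.range (i-1), ((-1:ℂ)^k * (i.choose k : ℂ)) •
      (X (((i-k : ℕ)) : Fin (d+1)) * X 1 ^ k * X 0 ^ (i-k-1))) +
  (((i-1 : ℕ) : ℂ) * (-1:ℂ)^(i+1)) • (X 1 ^ i : MvPolynomial (Fin (d+1)) ℂ)

lemma D1_add (d : ℕ) (f g : MvPolynomial (Fin (d+1)) ℂ) :
    D1 d (f + g) = D1 d f + D1 d g := by
  simp [D1, mul_add, smul_add, Finset.sum_add_distrib]

lemma D1_smul (d : ℕ) (c : ℂ) (f : MvPolynomial (Fin (d+1)) ℂ) :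
    D1 d (c • f) = c • D1 d f := by
  rw [D1, D1, Finset.smul_sum]
  refine Finset.sum_congr rfl fun j _ => ?_
  rw [Derivation.map_smul, mul_smul_comm, smul_comm]

lemma D1_sum (d : ℕ) {α : Type} (s : Finset α) (f : α → MvPolynomial (Fin (d+1)) ℂ) :
    D1 d (∑ k ∈ s, f k) = ∑ k ∈ s, D1 d (f k) := by
  classical
  induction s using Finset.induction_on with
  | empty => simp [D1]
  | insert _ _ h ih => simp [Finset.sum_insert h, D1_add, ih]

lemma fin_cast_ne (d : ℕ) {p q : ℕ} (hp : p < d+1) (hq : q < d+1) (h : p ≠ q) :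
    ((p : ℕ) : Fin (d+1)) ≠ ((q : ℕ) : Fin (d+1)) := by
  intro he
  apply h
  have := congrArg Fin.val he
  rwa [Fin.val_cast_of_lt hp, Fin.val_cast_of_lt hq] at this

lemma pd_self (d : ℕ) (hd : 2 ≤ d) (a : ℕ) (ha2 : 2 ≤ a) (had : a ≤ d) (k m : ℕ) :
    pderiv ((a : ℕ) : Fin (d+1))
      ((X ((a : ℕ) : Fin (d+1)) * X 1 ^ k * X 0 ^ m : MvPolynomial (Fin (d+1)) ℂ)) =
      X 1 ^ k * X 0 ^ m := by
  have hne1 : (1 : Fin (d+1)) ≠ ((a : ℕ) : Fin (d+1)) := by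
    have := fin_cast_ne d (p := 1) (q := a) (by omega) (by omega) (by omega)
    simpa using this
  have hne0 : (0 : Fin (d+1)) ≠ ((a : ℕ) : Fin (d+1)) := by
    have := fin_cast_ne d (p := 0) (q := a) (by omega) (by omega) (by omega)
    simpa using this
  simp only [pderiv_mul, pderiv_pow, pderiv_X_self, pderiv_X_of_ne hne1, pderiv_X_of_ne hne0,
    mul_zero, zero_mul, add_zero, zero_add, mul_one, one_mul]

lemma pd_one (d : ℕ) (hd : 2 ≤ d) (a : ℕ) (ha2 : 2 ≤ a) (had : a ≤ d) (k m : ℕ) :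
    pderiv (1 : Fin (d+1))
      ((X ((a : ℕ) : Fin (d+1)) * X 1 ^ k * X 0 ^ m : MvPolynomial (Fin (d+1)) ℂ)) =
      (k : ℂ) • (X ((a : ℕ) : Fin (d+1)) * X 1 ^ (k-1) * X 0 ^ m) := by
  have hne1 : ((a : ℕ) : Fin (d+1)) ≠ (1 : Fin (d+1)) := by
    have := fin_cast_ne d (p := a) (q := 1) (by omega) (by omega) (by omega)
    simpa using this
  have hne0 : (0 : Fin (d+1)) ≠ (1 : Fin (d+1)) := by
    have := fin_cast_ne d (p := 0) (q := 1) (by omega) (by omega) (by omega)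
    simpa using this
  simp only [pderiv_mul, pderiv_pow, pderiv_X_self, pderiv_X_of_ne hne1, pderiv_X_of_ne hne0,
    mul_zero, zero_mul, add_zero, zero_add, mul_one, one_mul]
  rw [smul_eq_C_mul, map_natCast]
  ring

lemma pd_other (d : ℕ) (hd : 2 ≤ d) (a : ℕ) (ha2 : 2 ≤ a) (had : a ≤ d) (k m j : ℕ)
    (hj : j < d) (hj0 : j ≠ 0) (hja : j + 1 ≠ a) :
    pderiv (((j+1 : ℕ)) : Fin (d+1))
      ((X ((a : ℕ) : Fin (d+1)) * X 1 ^ k * X 0 ^ m : MvPolynomial (Fin (d+1)) ℂ)) = 0 := by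
  have hnea : ((a : ℕ) : Fin (d+1)) ≠ (((j+1:ℕ)) : Fin (d+1)) :=
    fin_cast_ne d (by omega) (by omega) (by omega)
  have hne1 : (1 : Fin (d+1)) ≠ (((j+1:ℕ)) : Fin (d+1)) := by
    have := fin_cast_ne d (p := 1) (q := j+1) (by omega) (by omega) (by omega)
    simpa using this
  have hne0 : (0 : Fin (d+1)) ≠ (((j+1:ℕ)) : Fin (d+1)) := by
    have := fin_cast_ne d (p := 0) (q := j+1) (by omega) (by omega) (by omega)
    simpa using this
  simp only [pderiv_mul, pderiv_pow, pderiv_X_of_ne hnea, pderiv_X_of_ne hne1,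
    pderiv_X_of_ne hne0, mul_zero, zero_mul, add_zero, zero_add]

lemma D1_mono (d : ℕ) (hd : 2 ≤ d) (a : ℕ) (ha2 : 2 ≤ a) (had : a ≤ d) (k m : ℕ) :
    D1 d (X ((a : ℕ) : Fin (d+1)) * X 1 ^ k * X 0 ^ m) =
      (a : ℂ) • (X (((a-1 : ℕ)) : Fin (d+1)) * X 1 ^ k * X 0 ^ m) +
      (k : ℂ) • (X ((a : ℕ) : Fin (d+1)) * X 1 ^ (k-1) * X 0 ^ (m+1)) := by
  rw [D1]
  rw [Finset.sum_eq_add_of_mem 0 (a-1)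
    (by simp; omega) (by simp; omega) (by omega)
    (fun c hc hne => by
      rw [pd_other d hd a ha2 had k m c (Finset.mem_range.mp hc) hne.1 (by omega),
        mul_zero, smul_zero])]
  have ha1 : a - 1 + 1 = a := by omega
  rw [ha1]
  rw [pd_self d hd a ha2 had k m]
  simp only [zero_add, Nat.cast_zero, Nat.cast_one, one_smul]
  rw [pd_one d hd a ha2 had k m]
  rw [smul_eq_C_mul, smul_eq_C_mul, smul_eq_C_mul, smul_eq_C_mul]
  ring

lemma D1_X1_pow (d : ℕ) (hd : 2 ≤ d) (n : ℕ) :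
    D1 d ((X 1 ^ n : MvPolynomial (Fin (d+1)) ℂ)) = (n : ℂ) • (X 0 * X 1 ^ (n-1)) := by
  rw [D1]
  rw [Finset.sum_eq_single_of_mem 0 (by simp; omega)
    (fun j hj hj0 => by
      have hjlt : j < d := Finset.mem_range.mp hj
      have hne1 : (1 : Fin (d+1)) ≠ (((j+1:ℕ)) : Fin (d+1)) := by
        have := fin_cast_ne d (p := 1) (q := j+1) (by omega)
          (by omega) (by omega)
        simpa using this
      rw [pderiv_pow, pderiv_X_of_ne hne1, mul_zero, mul_zero, smul_zero])]
  simp only [zero_add, Nat.cast_zero, Nat.cast_one, one_smul]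
  rw [pderiv_pow, pderiv_X_self]
  rw [smul_eq_C_mul, map_natCast]
  ring

/-- The basic monomial appearing after differentiation. -/
noncomputable def Sm (d i k : ℕ) : MvPolynomial (Fin (d+1)) ℂ :=
  X (((i-k-1 : ℕ)) : Fin (d+1)) * X 1 ^ k * X 0 ^ (i-k-1)

lemma D1_term (d : ℕ) (hd : 2 ≤ d) (i : ℕ) (hi2 : 2 ≤ i) (hid : i ≤ d)
    (k : ℕ) (hk : k < i - 1) :
    D1 d (((-1:ℂ)^k * (i.choose k : ℂ)) •
        (X (((i-k : ℕ)) : Fin (d+1)) * X 1 ^ k * X 0 ^ (i-k-1))) =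
      ((-1:ℂ)^k * (i.choose k : ℂ) * ((i-k : ℕ) : ℂ)) • Sm d i k +
      ((-1:ℂ)^k * (i.choose k : ℂ) * (k : ℂ)) • Sm d i (k-1) := by
  rw [D1_smul, D1_mono d hd (i-k) (by omega) (by omega) k (i-k-1),
    smul_add, smul_smul, smul_smul]
  congr 1
  rcases Nat.eq_zero_or_pos k with h0 | hpos
  · subst h0; simp
  · rw [Sm]
    have e1 : i - (k-1) - 1 = i - k := by omega
    have e2 : i - k - 1 + 1 = i - (k-1) - 1 := by omega
    rw [e1, e2, e1]

theorem stmt1 (d : ℕ) (hd : 2 ≤ d) (i : ℕ) (hi2 : 2 ≤ i) (hid : i ≤ d) :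
    D1 d (z d i) = 0 := by
  rw [z, D1_add, D1_sum, D1_smul, D1_X1_pow d hd i]
  rw [Finset.sum_congr rfl
    (fun k hk => D1_term d hd i hi2 hid k (Finset.mem_range.mp hk))]
  rw [Finset.sum_add_distrib]
  have hi1 : i - 1 = (i - 2) + 1 := by omega
  rw [hi1, Finset.sum_range_succ, Finset.sum_range_succ']
  have h00 : ((-1:ℂ)^0 * (i.choose 0 : ℂ) * ((0:ℕ) : ℂ)) • Sm d i (0-1) = 0 := by
    simp
  rw [h00, add_zero]
  have hmain : ∀ k ∈ Finset.range (i-2),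
      ((-1:ℂ)^k * (i.choose k : ℂ) * ((i-k : ℕ) : ℂ)) • Sm d i k +
        ((-1:ℂ)^(k+1) * (i.choose (k+1) : ℂ) * ((k+1 : ℕ) : ℂ)) • Sm d i (k+1-1) = 0 := by
    intro k hk
    have hklt : k < i - 2 := Finset.mem_range.mp hk
    have e : k + 1 - 1 = k := rfl
    rw [e, ← add_smul]
    have hn := Nat.choose_succ_right_eq i k
    have hcast : (i.choose (k+1) : ℂ) * ((k+1 : ℕ) : ℂ) = (i.choose k : ℂ) * ((i-k : ℕ) : ℂ) := by
      exact_mod_cast congrArg (Nat.cast : ℕ → ℂ) hn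
    have hz : (-1:ℂ)^k * (i.choose k : ℂ) * ((i-k : ℕ) : ℂ) +
        (-1:ℂ)^(k+1) * (i.choose (k+1) : ℂ) * ((k+1 : ℕ) : ℂ) = 0 := by
      rw [pow_succ]
      linear_combination (-(-1:ℂ)^k) * hcast
    rw [hz, zero_smul]
  -- final two terms
  have hlast : ((-1:ℂ)^(i-2) * (i.choose (i-2) : ℂ) * ((i-(i-2) : ℕ) : ℂ)) • Sm d i (i-2) +
      (((i-2+1 : ℕ) : ℂ) * (-1:ℂ)^(i+1)) • ((i : ℂ) • (X 0 * X 1 ^ (i-2+1))) = 0 := by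
    have e2 : i - (i-2) = 2 := by omega
    have eSm : Sm d i (i-2) = X 1 * X 1 ^ (i-2) * X 0 := by
      rw [Sm]
      have e1 : i - (i-2) - 1 = 1 := by omega
      rw [e1]
      norm_num
    rw [e2, eSm, smul_smul]
    have hmono : (X 1 * X 1 ^ (i-2) * X 0 : MvPolynomial (Fin (d+1)) ℂ)
        = X 0 * X 1 ^ (i-2+1) := by
      rw [pow_succ]
      ring
    rw [hmono, ← add_smul]
    have hC : (i.choose (i-2) : ℕ) * 2 = i * (i-1) := by
      have h1 := Nat.choose_succ_right_eq i 1
      rw [Nat.choose_one_right] at h1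
      have hsymm : i.choose (i-2) = i.choose 2 := by
        have := Nat.choose_symm (show 2 ≤ i from hi2)
        simpa using this
      rw [hsymm]
      norm_num at h1
      omega
    have hCc : (i.choose (i-2) : ℂ) * 2 = (i : ℂ) * ((i-1 : ℕ) : ℂ) := by
      exact_mod_cast congrArg (Nat.cast : ℕ → ℂ) hC
    have hsign : (-1:ℂ)^(i+1) = -(-1:ℂ)^(i-2) := by
      rw [show i + 1 = (i-2) + 3 from by omega, pow_add]
      ring
    have hz2 : (-1:ℂ)^(i-2) * (i.choose (i-2) : ℂ) * ((2:ℕ) : ℂ) +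
        ((i-2+1 : ℕ) : ℂ) * (-1:ℂ)^(i+1) * (i : ℂ) = 0 := by
      rw [hsign]
      have hcc : ((i-2+1 : ℕ) : ℂ) = ((i-1 : ℕ) : ℂ) := by norm_cast; omega
      rw [hcc]
      push_cast [Nat.cast_sub (by omega : 1 ≤ i)] at hCc ⊢
      linear_combination ((-1:ℂ)^(i-2)) * hCc
    rw [hz2, zero_smul]
  have hS : (∑ k ∈ Finset.range (i-2), ((-1:ℂ)^k * (i.choose k : ℂ) * ((i-k : ℕ) : ℂ)) • Sm d i k) +
      (∑ k ∈ Finset.range (i-2), ((-1:ℂ)^(k+1) * (i.choose (k+1) : ℂ) * ((k+1 : ℕ) : ℂ)) • Sm d i (k+1-1)) = 0 := by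
    rw [← Finset.sum_add_distrib]
    exact Finset.sum_eq_zero hmain
  linear_combination hS + hlast
end

section
/- The kernel of the derivation D_1 on ℂ[t, x_1, ..., x_d] equals ℂ[t, z_2, ..., z_d][1/t] ∩ ℂ[t, x_1, ..., x_d], i.e. every polynomial f with D_1(f) = 0 can be written as a polynomial in t, z_2, ..., z_d divided by a power of t, and conversely every such element lying in the polynomial ring is killed by D_1. -/
open MvPolynomial Fin.NatCast

noncomputable def Der (d : ℕ) :
    Derivation ℂ (MvPolynomial (Fin (d+1)) ℂ) (MvPolynomial (Fin (d+1)) ℂ) :=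
  ∑ j ∈ Finset.range d,
    ((((j+1 : ℕ)) : ℂ) • (X ((j : ℕ) : Fin (d+1)) : MvPolynomial (Fin (d+1)) ℂ)) •
      pderiv (((j+1 : ℕ)) : Fin (d+1))

lemma D1_eq (d : ℕ) (f : MvPolynomial (Fin (d+1)) ℂ) : D1 d f = Der d f := by
  have h : ⇑(Der d) = ∑ j ∈ Finset.range d,
      ⇑(((((j+1 : ℕ)) : ℂ) • (X ((j : ℕ) : Fin (d+1)) : MvPolynomial (Fin (d+1)) ℂ)) •
      pderiv (((j+1 : ℕ)) : Fin (d+1))) := by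
    rw [Der]
    exact map_sum (Derivation.coeFnAddMonoidHom (R := ℂ)) _ _
  rw [D1]
  rw [h, Finset.sum_apply]
  refine Finset.sum_congr rfl fun j hj => ?_
  rw [Derivation.smul_apply]
  rw [smul_assoc, smul_eq_mul]

lemma cast_val (d a : ℕ) (h : a ≤ d) : (((a : ℕ) : Fin (d+1)) : ℕ) = a :=
  Fin.val_cast_of_lt (by omega)

lemma castne (d a b : ℕ) (ha : a ≤ d) (hb : b ≤ d) (h : a ≠ b) :
    ((a : ℕ) : Fin (d+1)) ≠ ((b : ℕ) : Fin (d+1)) := by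
  intro hc
  exact h (by rw [← cast_val d a ha, ← cast_val d b hb, hc])

lemma Der_X_zero (d : ℕ) : Der d (X 0 : MvPolynomial (Fin (d+1)) ℂ) = 0 := by
  rw [← D1_eq, D1]
  refine Finset.sum_eq_zero fun j hj => ?_
  rw [pderiv_X_of_ne, mul_zero, smul_zero]
  have : (((0:ℕ) : Fin (d+1))) = 0 := by simp
  rw [← this]
  exact castne d 0 (j+1) (by omega) (by simp at hj; omega) (by omega)

lemma Der_X (d m : ℕ) (h1 : 1 ≤ m) (h2 : m ≤ d) :
    Der d (X ((m : ℕ) : Fin (d+1)) : MvPolynomial (Fin (d+1)) ℂ)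
      = (m : ℂ) • X (((m-1 : ℕ)) : Fin (d+1)) := by
  rw [← D1_eq, D1]
  rw [Finset.sum_eq_single (m-1)]
  · have hm : m - 1 + 1 = m := by omega
    rw [hm, pderiv_X_self, mul_one]
  · intro j hj hne
    rw [pderiv_X_of_ne, mul_zero, smul_zero]
    exact castne d m (j+1) h2 (by simp at hj; omega) (by omega)
  · intro h; exact absurd (Finset.mem_range.mpr (by omega)) h

lemma Der_X_one (d : ℕ) (hd : 1 ≤ d) :
    Der d (X 1 : MvPolynomial (Fin (d+1)) ℂ) = X 0 := by
  have h0 : (((0:ℕ)) : Fin (d+1)) = 0 := by simp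
  have h1 : (((1:ℕ)) : Fin (d+1)) = 1 := by simp
  have := Der_X d 1 le_rfl hd
  rw [h1] at this
  simpa [h0] using this

lemma Der_X1_pow (d k : ℕ) (hd : 1 ≤ d) :
    Der d ((X 1 : MvPolynomial (Fin (d+1)) ℂ) ^ k)
      = (k : ℂ) • (X 1 ^ (k-1) * X 0) := by
  rw [Derivation.leibniz_pow, Der_X_one d hd]
  rw [smul_eq_mul]
  rw [← Nat.cast_smul_eq_nsmul ℂ]

lemma Der_X0_pow (d e : ℕ) :
    Der d ((X 0 : MvPolynomial (Fin (d+1)) ℂ) ^ e) = 0 := by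
  rw [Derivation.leibniz_pow, Der_X_zero d, smul_zero, smul_zero]

lemma Der_term (d i k : ℕ) (h2 : 2 ≤ i) (hid : i ≤ d) (hk : k ≤ i - 2) :
    Der d ((X (((i-k : ℕ)) : Fin (d+1)) * X 1 ^ k * X 0 ^ (i-k-1)) :
        MvPolynomial (Fin (d+1)) ℂ)
      = ((i-k : ℕ) : ℂ) • (X (((i-k-1 : ℕ)) : Fin (d+1)) * X 1 ^ k * X 0 ^ (i-k-1))
        + (k : ℂ) • (X (((i-k : ℕ)) : Fin (d+1)) * X 1 ^ (k-1) * X 0 ^ (i-k)) := by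
  have hd : 1 ≤ d := by omega
  rw [Derivation.leibniz, Derivation.leibniz, Der_X0_pow, smul_zero, zero_add]
  rw [Der_X1_pow d k hd, Der_X d (i-k) (by omega) (by omega)]
  simp only [smul_eq_mul, MvPolynomial.smul_eq_C_mul]
  have hpow : (X 0 : MvPolynomial (Fin (d+1)) ℂ) ^ (i-k) = X 0 ^ (i-k-1) * X 0 := by
    rw [← pow_succ]; congr 1; omega
  rw [hpow]
  ring

lemma Der_z (d i : ℕ) (h2 : 2 ≤ i) (hid : i ≤ d) : Der d (z d i) = 0 := by
  have hd : 1 ≤ d := by omega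
  rw [z, map_add, Derivation.map_smul, map_sum, Der_X1_pow d i hd]
  have hsum : ∀ k ∈ Finset.range (i-1),
      Der d ((((-1:ℂ)^k * (i.choose k : ℂ))) •
        (X (((i-k : ℕ)) : Fin (d+1)) * X 1 ^ k * X 0 ^ (i-k-1)))
      = ((-1:ℂ)^k * (i.choose k : ℂ) * ((i-k : ℕ) : ℂ)) •
          (X (((i-k-1 : ℕ)) : Fin (d+1)) * X 1 ^ k * X 0 ^ (i-k-1))
        + ((-1:ℂ)^k * (i.choose k : ℂ) * (k : ℂ)) •
          (X (((i-k : ℕ)) : Fin (d+1)) * X 1 ^ (k-1) * X 0 ^ (i-k)) := by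
    intro k hk
    rw [Finset.mem_range] at hk
    rw [Derivation.map_smul, Der_term d i k h2 hid (by omega), smul_add, smul_smul, smul_smul]
  rw [Finset.sum_congr rfl hsum, Finset.sum_add_distrib]
  -- second sum: reindex
  have hre : i - 1 = (i-2) + 1 := by omega
  have hS2 : (∑ k ∈ Finset.range (i-1), ((-1:ℂ)^k * (i.choose k : ℂ) * (k : ℂ)) •
          ((X (((i-k : ℕ)) : Fin (d+1)) * X 1 ^ (k-1) * X 0 ^ (i-k)) :
            MvPolynomial (Fin (d+1)) ℂ))
      = ∑ j ∈ Finset.range (i-2), ((-1:ℂ)^(j+1) * (i.choose (j+1) : ℂ) * ((j+1 : ℕ) : ℂ)) •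
          (X (((i-j-1 : ℕ)) : Fin (d+1)) * X 1 ^ j * X 0 ^ (i-j-1)) := by
    rw [hre, Finset.sum_range_succ']
    simp only [Nat.cast_zero, mul_zero, zero_smul, add_zero, Nat.add_sub_cancel]
    refine Finset.sum_congr rfl fun j hj => ?_
    have e1 : i - (j+1) = i - j - 1 := by omega
    rw [e1]
  rw [hS2]
  -- first sum : peel last term
  have hS1 : (∑ k ∈ Finset.range (i-1), ((-1:ℂ)^k * (i.choose k : ℂ) * ((i-k : ℕ) : ℂ)) •
          ((X (((i-k-1 : ℕ)) : Fin (d+1)) * X 1 ^ k * X 0 ^ (i-k-1)) :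
            MvPolynomial (Fin (d+1)) ℂ))
      = (∑ j ∈ Finset.range (i-2), ((-1:ℂ)^j * (i.choose j : ℂ) * ((i-j : ℕ) : ℂ)) •
          (X (((i-j-1 : ℕ)) : Fin (d+1)) * X 1 ^ j * X 0 ^ (i-j-1)))
        + ((-1:ℂ)^(i-2) * (i.choose (i-2) : ℂ) * ((i-(i-2) : ℕ) : ℂ)) •
          (X (((i-(i-2)-1 : ℕ)) : Fin (d+1)) * X 1 ^ (i-2) * X 0 ^ (i-(i-2)-1)) := by
    rw [hre, Finset.sum_range_succ]
  rw [hS1]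
  have hcomb : ∀ (a b c e : MvPolynomial (Fin (d+1)) ℂ),
      a + b + c + e = (a + c) + (b + e) := by intros; ring
  rw [hcomb, ← Finset.sum_add_distrib]
  have hzero : ∀ j ∈ Finset.range (i-2),
      ((-1:ℂ)^j * (i.choose j : ℂ) * ((i-j : ℕ) : ℂ)) •
          ((X (((i-j-1 : ℕ)) : Fin (d+1)) * X 1 ^ j * X 0 ^ (i-j-1)) :
            MvPolynomial (Fin (d+1)) ℂ)
        + ((-1:ℂ)^(j+1) * (i.choose (j+1) : ℂ) * ((j+1 : ℕ) : ℂ)) •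
          (X (((i-j-1 : ℕ)) : Fin (d+1)) * X 1 ^ j * X 0 ^ (i-j-1)) = 0 := by
    intro j hj
    rw [← add_smul]
    convert zero_smul ℂ _
    have hc : ((i.choose (j+1) : ℂ)) * ((j+1 : ℕ) : ℂ)
        = (i.choose j : ℂ) * ((i-j : ℕ) : ℂ) := by
      exact_mod_cast congrArg (Nat.cast : ℕ → ℂ) (Nat.choose_succ_right_eq i j)
    linear_combination (-(-1:ℂ)^j) * hc
  rw [Finset.sum_congr rfl hzero, Finset.sum_const_zero, zero_add]
  -- leftover
  have e2 : i - (i-2) = 2 := by omega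
  have e4 : (((1:ℕ)) : Fin (d+1)) = 1 := by simp
  rw [e2]
  simp only [show (2:ℕ)-1 = 1 from rfl, pow_one, e4]
  have e5 : (X 1 : MvPolynomial (Fin (d+1)) ℂ) * X 1 ^ (i-2) * X 0
      = X 1 ^ (i-1) * X 0 := by
    rw [← pow_succ']
    congr 2
    omega
  rw [e5, smul_smul]
  rw [← add_smul]
  convert zero_smul ℂ _
  have hch : (i.choose (i-2) : ℂ) = (i : ℂ) * ((i:ℂ) - 1) / 2 := by
    rw [Nat.choose_symm h2, Nat.cast_choose_two]
  have hsg : ((-1:ℂ))^(i-2) = (-1)^i := by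
    have : i = (i-2) + 2 := by omega
    rw [this]; rw [pow_add]; norm_num
  have hc1 : (((i-1 : ℕ)) : ℂ) = (i:ℂ) - 1 := by
    have : (1:ℕ) ≤ i := by omega
    push_cast [Nat.cast_sub this]
    ring
  rw [hch, hsg, hc1, pow_succ]
  ring

noncomputable def w (d : ℕ) : Fin (d+1) → MvPolynomial (Fin (d+1)) ℂ :=
  fun i => if (i:ℕ) < 2 then X i else z d (i:ℕ)

lemma w_zero (d : ℕ) : w d 0 = X 0 := by
  simp [w]

lemma val_one' (d : ℕ) (hd : 2 ≤ d) : ((1 : Fin (d+1)) : ℕ) = 1 := by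
  rw [Fin.val_one']
  exact Nat.mod_eq_of_lt (by omega)

lemma w_one (d : ℕ) (hd : 2 ≤ d) : w d 1 = X 1 := by
  simp only [w, val_one' d hd]
  norm_num

lemma w_of_ge (d : ℕ) (i : Fin (d+1)) (h : 2 ≤ (i:ℕ)) : w d i = z d (i:ℕ) := by
  simp [w, Nat.not_lt.mpr h]

lemma Der_w (d : ℕ) (hd : 2 ≤ d) (i : Fin (d+1)) :
    Der d (w d i) = if (i:ℕ) = 1 then X 0 else 0 := by
  rcases lt_or_ge (i:ℕ) 2 with h | h
  · have : (i:ℕ) = 0 ∨ (i:ℕ) = 1 := by omega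
    rcases this with hi | hi
    · have hi0 : i = 0 := by ext; simpa using hi
      subst hi0
      rw [w_zero, Der_X_zero]
      simp
    · have hi1 : i = 1 := Fin.ext (hi.trans (val_one' d hd).symm)
      subst hi1
      rw [w_one d hd, Der_X_one d (by omega)]
      rw [val_one' d hd]
      simp
  · rw [w_of_ge d i h, Der_z d (i:ℕ) h (by omega)]
    have : (i:ℕ) ≠ 1 := by omega
    simp [this]

lemma chain (d : ℕ) (hd : 2 ≤ d) (Q : MvPolynomial (Fin (d+1)) ℂ) :
    Der d (aeval (w d) Q) = X 0 * aeval (w d) (pderiv 1 Q) := by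
  induction Q using MvPolynomial.induction_on with
  | C a =>
    simp only [aeval_C, pderiv_C, map_zero, mul_zero]
    exact Derivation.map_algebraMap _ a
  | add p q hp hq => simp only [map_add, hp, hq]; ring
  | mul_X p i hp =>
    rw [map_mul, aeval_X, Derivation.leibniz, smul_eq_mul, smul_eq_mul]
    rw [hp, Der_w d hd i, pderiv_mul, map_add, map_mul, map_mul, aeval_X]
    by_cases hi : i = (1 : Fin (d+1))
    · subst hi
      rw [pderiv_X_self]
      rw [if_pos (val_one' d hd), w_one d hd, map_one]
      ring
    · have hv : (i:ℕ) ≠ 1 := fun hc => hi (Fin.ext (hc.trans (val_one' d hd).symm))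
      rw [pderiv_X_of_ne hi]
      simp only [hv, if_false, map_zero]
      ring

noncomputable def Rbig (d : ℕ) : Subalgebra ℂ (MvPolynomial (Fin (d+1)) ℂ) :=
  Algebra.adjoin ℂ (Set.range (w d))

lemma X0_mem (d : ℕ) : (X 0 : MvPolynomial (Fin (d+1)) ℂ) ∈ Rbig d := by
  rw [← w_zero d]
  exact Algebra.subset_adjoin ⟨0, rfl⟩

lemma X1_mem (d : ℕ) (hd : 2 ≤ d) : (X 1 : MvPolynomial (Fin (d+1)) ℂ) ∈ Rbig d := by
  rw [← w_one d hd]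
  exact Algebra.subset_adjoin ⟨1, rfl⟩

lemma z_mem (d i : ℕ) (h2 : 2 ≤ i) (hid : i ≤ d) : z d i ∈ Rbig d := by
  have hlt : i < d + 1 := by omega
  have : w d ⟨i, hlt⟩ = z d i := by
    rw [w_of_ge d ⟨i, hlt⟩ (by simpa using h2)]
  rw [← this]
  exact Algebra.subset_adjoin ⟨_, rfl⟩

lemma L5 (d : ℕ) (hd : 2 ≤ d) : ∀ m, 2 ≤ m → m ≤ d →
    (X 0 : MvPolynomial (Fin (d+1)) ℂ)^(m-1) * X ((m : ℕ) : Fin (d+1)) ∈ Rbig d := by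
  intro m
  induction m using Nat.strong_induction_on with
  | _ m IH =>
    intro hm2 hmd
    have hsum2 : (∑ k ∈ Finset.range (m-1), ((-1:ℂ)^k * (m.choose k : ℂ)) •
          ((X (((m-k : ℕ)) : Fin (d+1)) * X 1 ^ k * X 0 ^ (m-k-1)) :
            MvPolynomial (Fin (d+1)) ℂ))
        = (∑ j ∈ Finset.range (m-2),
          ((-1:ℂ)^(j+1) * (m.choose (j+1):ℂ)) •
            ((X (((m-j-1 : ℕ)) : Fin (d+1)) * X 1^(j+1) * X 0^(m-j-1-1)) :
              MvPolynomial (Fin (d+1)) ℂ))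
          + X 0^(m-1) * X (((m : ℕ)) : Fin (d+1)) := by
      rw [show m-1 = (m-2)+1 by omega, Finset.sum_range_succ']
      congr 1
      · simp only [pow_zero, one_mul, Nat.choose_zero_right, Nat.cast_one, one_smul,
          Nat.sub_zero, mul_one]
        rw [show m-2+1 = m - 1 by omega]
        exact mul_comm _ _
    have hkey : (X 0 : MvPolynomial (Fin (d+1)) ℂ)^(m-1) * X (((m : ℕ)) : Fin (d+1))
        = z d m - (∑ j ∈ Finset.range (m-2),
          ((-1:ℂ)^(j+1) * (m.choose (j+1):ℂ)) •
            ((X (((m-j-1 : ℕ)) : Fin (d+1)) * X 1^(j+1) * X 0^(m-j-1-1)) :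
              MvPolynomial (Fin (d+1)) ℂ))
          - (((m-1:ℕ):ℂ) * (-1:ℂ)^(m+1)) • X 1^m := by
      rw [z, hsum2]; ring
    rw [hkey]
    refine sub_mem (sub_mem (z_mem d m hm2 hmd) ?_) ?_
    · refine Subalgebra.sum_mem _ fun j hj => Subalgebra.smul_mem _ ?_ _
      rw [Finset.mem_range] at hj
      have hre : (X (((m-j-1 : ℕ)) : Fin (d+1)) : MvPolynomial (Fin (d+1)) ℂ)
            * X 1^(j+1) * X 0^(m-j-1-1)
          = (X 0^(m-j-1-1) * X (((m-j-1 : ℕ)) : Fin (d+1))) * X 1^(j+1) := by ring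
      rw [hre]
      exact mul_mem (IH (m-j-1) (by omega) (by omega) (by omega))
        (pow_mem (X1_mem d hd) _)
    · exact Subalgebra.smul_mem _ (pow_mem (X1_mem d hd) _) _

lemma L6 (d : ℕ) (hd : 2 ≤ d) (f : MvPolynomial (Fin (d+1)) ℂ) :
    ∃ s : ℕ, (X 0 : MvPolynomial (Fin (d+1)) ℂ)^s * f ∈ Rbig d := by
  induction f using MvPolynomial.induction_on with
  | C a =>
    exact ⟨0, by simpa using Subalgebra.algebraMap_mem (Rbig d) a⟩
  | add p q hp hq =>
    obtain ⟨s1, h1⟩ := hp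
    obtain ⟨s2, h2⟩ := hq
    refine ⟨s1 + s2, ?_⟩
    have : (X 0 : MvPolynomial (Fin (d+1)) ℂ)^(s1+s2) * (p + q)
        = X 0^s2 * (X 0^s1 * p) + X 0^s1 * (X 0^s2 * q) := by
      rw [pow_add]; ring
    rw [this]
    exact add_mem (mul_mem (pow_mem (X0_mem d) _) h1)
      (mul_mem (pow_mem (X0_mem d) _) h2)
  | mul_X p i hp =>
    obtain ⟨s, h⟩ := hp
    by_cases hi : (i:ℕ) < 2
    · refine ⟨s, ?_⟩
      have : (X 0 : MvPolynomial (Fin (d+1)) ℂ)^s * (p * X i) = (X 0^s * p) * X i := by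
        ring
      rw [this]
      refine mul_mem h ?_
      have hw : w d i = X i := by simp only [w, if_pos hi]
      rw [← hw]
      exact Algebra.subset_adjoin ⟨i, rfl⟩
    · refine ⟨s + ((i:ℕ) - 1), ?_⟩
      have hXi : (X i : MvPolynomial (Fin (d+1)) ℂ) = X (((i:ℕ) : ℕ) : Fin (d+1)) := by
        rw [Fin.cast_val_eq_self]
      have : (X 0 : MvPolynomial (Fin (d+1)) ℂ)^(s + ((i:ℕ)-1)) * (p * X i)
          = (X 0^s * p) * (X 0^((i:ℕ)-1) * X i) := by
        rw [pow_add]; ring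
      rw [this, hXi]
      exact mul_mem h (L5 d hd (i:ℕ) (by omega) (by omega))

lemma Der_zero_of_mem (d : ℕ) (hd : 2 ≤ d) {x : MvPolynomial (Fin (d+1)) ℂ}
    (hx : x ∈ Algebra.adjoin ℂ
      ({X 0} ∪ {p | ∃ i, 2 ≤ i ∧ i ≤ d ∧ p = z d i} :
        Set (MvPolynomial (Fin (d+1)) ℂ))) :
    Der d x = 0 := by
  induction hx using Algebra.adjoin_induction with
  | mem y hy =>
    rcases hy with hy | ⟨i, h2, hid, rfl⟩
    · rcases hy with rfl
      exact Der_X_zero d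
    · exact Der_z d i h2 hid
  | algebraMap r => exact Derivation.map_algebraMap _ r
  | add a b ha hb iha ihb => rw [map_add, iha, ihb, add_zero]
  | mul a b ha hb iha ihb =>
    rw [Derivation.leibniz, iha, ihb, smul_zero, smul_zero, add_zero]

open LaurentPolynomial in
noncomputable def uB : ℕ → MvPolynomial ℕ (LaurentPolynomial ℂ)
  | 0 => X 0
  | (m+1) => MvPolynomial.C (T (-1))^(m+1) *
      (X (m+1)
        - (∑ k ∈ Finset.range m, ((-1:ℂ)^(k+1) * (((m+2).choose (k+1)) : ℂ)) •
            (uB (m-k) * X 0^(k+1) * MvPolynomial.C (T 1)^(m-k)))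
        - (((m+1 : ℕ) : ℂ) * (-1:ℂ)^(m+2+1)) • X 0^(m+2))
  decreasing_by exact Nat.lt_succ_of_le (Nat.sub_le m k)

lemma uB_zero : uB 0 = X 0 := by rw [uB]

open LaurentPolynomial in
lemma uB_succ (m : ℕ) : uB (m+1) = MvPolynomial.C (T (-1))^(m+1) *
      (X (m+1)
        - (∑ k ∈ Finset.range m, ((-1:ℂ)^(k+1) * (((m+2).choose (k+1)) : ℂ)) •
            (uB (m-k) * X 0^(k+1) * MvPolynomial.C (T 1)^(m-k)))
        - (((m+1 : ℕ) : ℂ) * (-1:ℂ)^(m+2+1)) • X 0^(m+2)) := by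
  rw [uB]

open LaurentPolynomial in
noncomputable def vB (d : ℕ) : Fin (d+1) → MvPolynomial ℕ (LaurentPolynomial ℂ) :=
  fun i => if (i:ℕ) = 0 then MvPolynomial.C (T 1) else X ((i:ℕ) - 1)

open LaurentPolynomial

lemma vB_zero (d : ℕ) : vB d 0 = MvPolynomial.C (T 1) := by simp [vB]

lemma vB_one (d : ℕ) (hd : 2 ≤ d) : vB d 1 = X 0 := by
  have h := val_one' d hd
  simp only [vB, h]
  norm_num

lemma vB_cast (d m : ℕ) (h1 : 1 ≤ m) (hmd : m ≤ d) :
    vB d ((m : ℕ) : Fin (d+1)) = X (m-1) := by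
  simp only [vB, cast_val d m hmd]
  rw [if_neg (by omega)]

lemma jz (d i : ℕ) (hd : 2 ≤ d) (h2 : 2 ≤ i) (hid : i ≤ d) :
    aeval (vB d) (z d i) =
      (∑ k ∈ Finset.range (i-1), ((-1:ℂ)^k * (i.choose k : ℂ)) •
        ((X (i-k-1) : MvPolynomial ℕ (LaurentPolynomial ℂ)) * X 0^k *
          MvPolynomial.C (T 1)^(i-k-1)))
      + (((i-1:ℕ):ℂ) * (-1:ℂ)^(i+1)) • (X 0 : MvPolynomial ℕ (LaurentPolynomial ℂ))^i := by
  rw [z, map_add, map_smul, map_pow, aeval_X, vB_one d hd, map_sum]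
  congr 1
  refine Finset.sum_congr rfl fun k hk => ?_
  rw [Finset.mem_range] at hk
  rw [map_smul, map_mul, map_mul, map_pow, map_pow, aeval_X, aeval_X, aeval_X,
    vB_zero, vB_one d hd, vB_cast d (i-k) (by omega) (by omega)]

noncomputable def GInj (d : ℕ) :
    MvPolynomial (Fin (d+1)) ℂ →ₐ[ℂ] MvPolynomial ℕ (LaurentPolynomial ℂ) :=
  (((rename (Fin.val : Fin d → ℕ) :
      MvPolynomial (Fin d) (LaurentPolynomial ℂ) →ₐ[LaurentPolynomial ℂ] _).restrictScalars ℂ).comp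
    ((mapAlgHom (Polynomial.toLaurentAlg : Polynomial ℂ →ₐ[ℂ] LaurentPolynomial ℂ)).comp
      ((optionEquivRight ℂ (Fin d)).toAlgHom.comp
        (renameEquiv ℂ (finSuccEquiv d)).toAlgHom)))

lemma GInj_injective (d : ℕ) : Function.Injective (GInj d) := by
  rw [GInj]
  simp only [AlgHom.coe_comp, AlgHom.coe_restrictScalars', AlgEquiv.toAlgHom_eq_coe,
    AlgHom.coe_coe]
  refine Function.Injective.comp (rename_injective _ Fin.val_injective) ?_
  refine Function.Injective.comp ?_ ?_
  · have : ⇑(mapAlgHom (R := ℂ) (σ := Fin d)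
        (Polynomial.toLaurentAlg : Polynomial ℂ →ₐ[ℂ] LaurentPolynomial ℂ))
        = ⇑(map (Polynomial.toLaurent : Polynomial ℂ →+* LaurentPolynomial ℂ)) := rfl
    rw [this]
    exact map_injective _ Polynomial.toLaurent_injective
  · exact Function.Injective.comp (optionEquivRight ℂ (Fin d)).injective
      (renameEquiv ℂ (finSuccEquiv d)).injective

lemma GInj_eq (d : ℕ) : GInj d = aeval (vB d) := by
  apply algHom_ext
  intro i
  rw [aeval_X]
  induction i using Fin.cases with
  | zero =>
    rw [GInj]
    simp only [AlgHom.coe_comp, AlgHom.coe_restrictScalars', AlgEquiv.toAlgHom_eq_coe,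
      AlgHom.coe_coe, AlgEquiv.coe_toAlgHom, Function.comp_apply, renameEquiv_apply, rename_X, finSuccEquiv_zero,
      optionEquivRight_X_none, vB_zero]
    have : ⇑(mapAlgHom (R := ℂ) (σ := Fin d)
        (Polynomial.toLaurentAlg : Polynomial ℂ →ₐ[ℂ] LaurentPolynomial ℂ))
        = ⇑(map (Polynomial.toLaurent : Polynomial ℂ →+* LaurentPolynomial ℂ)) := rfl
    rw [this, map_C, rename_C, Polynomial.toLaurent_X]
  | succ k =>
    rw [GInj]
    simp only [AlgHom.coe_comp, AlgHom.coe_restrictScalars', AlgEquiv.toAlgHom_eq_coe,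
      AlgHom.coe_coe, AlgEquiv.coe_toAlgHom, Function.comp_apply, renameEquiv_apply, rename_X, finSuccEquiv_succ,
      optionEquivRight_X_some]
    have : ⇑(mapAlgHom (R := ℂ) (σ := Fin d)
        (Polynomial.toLaurentAlg : Polynomial ℂ →ₐ[ℂ] LaurentPolynomial ℂ))
        = ⇑(map (Polynomial.toLaurent : Polynomial ℂ →+* LaurentPolynomial ℂ)) := rfl
    rw [this, map_X, rename_X]
    rw [vB]
    simp only [Fin.val_succ]
    norm_num

noncomputable def Psi : MvPolynomial ℕ (LaurentPolynomial ℂ) →ₐ[ℂ]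
    MvPolynomial ℕ (LaurentPolynomial ℂ) :=
  (aeval uB : MvPolynomial ℕ (LaurentPolynomial ℂ) →ₐ[LaurentPolynomial ℂ] _).restrictScalars ℂ

lemma Psi_X (n : ℕ) : Psi (X n) = uB n := by
  simp [Psi]

lemma Psi_C (x : LaurentPolynomial ℂ) : Psi (MvPolynomial.C x) = MvPolynomial.C x := by
  simp only [Psi, AlgHom.coe_restrictScalars']
  rw [aeval_C, algebraMap_eq]

lemma psi_z (d i : ℕ) (hd : 2 ≤ d) (h2 : 2 ≤ i) (hid : i ≤ d) :
    Psi (aeval (vB d) (z d i)) = X (i-1) := by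
  obtain ⟨m, rfl⟩ : ∃ m, i = m + 2 := ⟨i - 2, by omega⟩
  rw [jz d (m+2) hd h2 hid]
  rw [map_add, map_smul, map_pow, Psi_X, uB_zero, map_sum]
  have hterm : ∀ k ∈ Finset.range (m+2-1),
      Psi (((-1:ℂ)^k * ((m+2).choose k : ℂ)) •
        ((X (m+2-k-1) : MvPolynomial ℕ (LaurentPolynomial ℂ)) * X 0^k *
          MvPolynomial.C (T 1)^(m+2-k-1)))
      = ((-1:ℂ)^k * ((m+2).choose k : ℂ)) •
        (uB (m+2-k-1) * X 0^k * MvPolynomial.C (T 1)^(m+2-k-1)) := by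
    intro k hk
    rw [map_smul, map_mul, map_mul, map_pow, map_pow, Psi_X, Psi_X, Psi_C, uB_zero]
  rw [Finset.sum_congr rfl hterm]
  rw [show m+2-1 = m+1 from rfl, Finset.sum_range_succ']
  have hidx : ∀ k ∈ Finset.range m,
      ((-1:ℂ)^(k+1) * ((m+2).choose (k+1) : ℂ)) •
        (uB (m+2-(k+1)-1) * (X 0 : MvPolynomial ℕ (LaurentPolynomial ℂ))^(k+1) *
          MvPolynomial.C (T 1)^(m+2-(k+1)-1))
      = ((-1:ℂ)^(k+1) * ((m+2).choose (k+1) : ℂ)) •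
        (uB (m-k) * (X 0 : MvPolynomial ℕ (LaurentPolynomial ℂ))^(k+1) *
          MvPolynomial.C (T 1)^(m-k)) := by
    intro k hk
    rw [show m+2-(k+1)-1 = m-k by omega]
  rw [Finset.sum_congr rfl hidx]
  simp only [pow_zero, Nat.choose_zero_right, Nat.cast_one, one_mul, mul_one, one_smul]
  rw [show m+2-0-1 = m+1 from rfl]
  have hone : (MvPolynomial.C (T (-1)) : MvPolynomial ℕ (LaurentPolynomial ℂ))^(m+1) *
      MvPolynomial.C (T 1)^(m+1) = 1 := by
    rw [← mul_pow, ← map_mul, ← T_add]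
    norm_num
  rw [uB_succ m]
  set S := ∑ k ∈ Finset.range m, ((-1:ℂ)^(k+1) * (((m+2).choose (k+1)) : ℂ)) •
      (uB (m-k) * (X 0 : MvPolynomial ℕ (LaurentPolynomial ℂ))^(k+1) *
        MvPolynomial.C (T 1)^(m-k)) with hS
  set ctm := (((m+1 : ℕ) : ℂ) * (-1:ℂ)^(m+2+1)) •
      (X 0 : MvPolynomial ℕ (LaurentPolynomial ℂ))^(m+2) with hctm
  linear_combination ((X (m+1) : MvPolynomial ℕ (LaurentPolynomial ℂ)) - S - ctm) * hone

lemma comp_eq (d : ℕ) (hd : 2 ≤ d) :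
    Psi.comp ((aeval (vB d) :
        MvPolynomial (Fin (d+1)) ℂ →ₐ[ℂ] MvPolynomial ℕ (LaurentPolynomial ℂ)).comp
      (aeval (w d) : MvPolynomial (Fin (d+1)) ℂ →ₐ[ℂ] MvPolynomial (Fin (d+1)) ℂ))
    = aeval (vB d) := by
  apply algHom_ext
  intro i
  simp only [AlgHom.coe_comp, Function.comp_apply, aeval_X]
  rcases lt_or_ge (i:ℕ) 2 with h | h
  · have : (i:ℕ) = 0 ∨ (i:ℕ) = 1 := by omega
    rcases this with hi | hi
    · have hi0 : i = 0 := by ext; simpa using hi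
      subst hi0
      rw [w_zero, aeval_X, vB_zero, Psi_C]
    · have hi1 : i = 1 := Fin.ext (hi.trans (val_one' d hd).symm)
      subst hi1
      rw [w_one d hd, aeval_X, vB_one d hd, Psi_X, uB_zero]
  · rw [w_of_ge d i h, psi_z d (i:ℕ) hd h (by omega)]
    rw [show vB d i = X ((i:ℕ)-1) by simp only [vB]; rw [if_neg (by omega)]]

lemma waeval_inj (d : ℕ) (hd : 2 ≤ d) :
    Function.Injective (aeval (w d) :
      MvPolynomial (Fin (d+1)) ℂ →ₐ[ℂ] MvPolynomial (Fin (d+1)) ℂ) := by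
  have h1 : Function.Injective (aeval (vB d) :
      MvPolynomial (Fin (d+1)) ℂ →ₐ[ℂ] MvPolynomial ℕ (LaurentPolynomial ℂ)) := by
    rw [← GInj_eq]
    exact GInj_injective d
  have h2 := comp_eq d hd
  have h3 : ∀ p : MvPolynomial (Fin (d+1)) ℂ,
      aeval (vB d) p = Psi (aeval (vB d) (aeval (w d) p)) := by
    intro p
    conv_lhs => rw [← h2]
    rfl
  intro a b hab
  apply h1
  rw [h3 a, h3 b, hab]

lemma coeff_pderiv {σ : Type*} [DecidableEq σ] (i : σ) (f : MvPolynomial σ ℂ) (m : σ →₀ ℕ) :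
    coeff m (pderiv i f) = ((m i : ℂ) + 1) * coeff (m + Finsupp.single i 1) f := by
  induction f using MvPolynomial.induction_on' with
  | add p q hp hq =>
    rw [map_add, coeff_add, coeff_add, hp, hq]
    ring
  | monomial u a =>
    rw [pderiv_monomial, coeff_monomial, coeff_monomial]
    by_cases h : u = m + Finsupp.single i 1
    · subst h
      rw [if_pos (add_tsub_cancel_right _ _), if_pos rfl, Finsupp.add_apply,
        Finsupp.single_eq_same]
      push_cast
      ring
    · rw [if_neg h]
      by_cases h2 : u - Finsupp.single i 1 = m
      · by_cases h3 : u i = 0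
        · rw [if_pos h2]
          simp [h3]
        · exfalso
          apply h
          rw [← h2, tsub_add_cancel_of_le]
          exact Finsupp.single_le_iff.mpr (by omega)
      · rw [if_neg h2, mul_zero]

lemma supported_of_pderiv_zero {σ : Type*} [DecidableEq σ] (i : σ) (f : MvPolynomial σ ℂ)
    (h : pderiv i f = 0) : f ∈ supported ℂ {j | j ≠ i} := by
  rw [mem_supported]
  intro j hj
  simp only [Set.mem_setOf_eq]
  rintro rfl
  rw [Finset.mem_coe, mem_vars] at hj
  obtain ⟨mo, hmo, hjmo⟩ := hj
  have h1 : mo j ≠ 0 := Finsupp.mem_support_iff.mp hjmo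
  have hc := coeff_pderiv j f (mo - Finsupp.single j 1)
  rw [h, coeff_zero] at hc
  rw [tsub_add_cancel_of_le (Finsupp.single_le_iff.mpr (by omega))] at hc
  rcases mul_eq_zero.mp hc.symm with h' | h'
  · exact absurd h' (Nat.cast_add_one_ne_zero _)
  · exact MvPolynomial.mem_support_iff.mp hmo h'

/-- `ker D₁ = ℂ[t, z_2, …, z_d][1/t] ∩ ℂ[t, x_1, …, x_d]`: a polynomial is killed by `D₁`
iff, after multiplying by a suitable power of `t`, it lies in the subalgebra generated by
`t` and the `z_i`. -/
theorem stmt4 (d : ℕ) (hd : 2 ≤ d) (f : MvPolynomial (Fin (d+1)) ℂ) :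
    D1 d f = 0 ↔
      ∃ s : ℕ, (X 0 : MvPolynomial (Fin (d+1)) ℂ) ^ s * f ∈
        Algebra.adjoin ℂ ({X 0} ∪ {p | ∃ i, 2 ≤ i ∧ i ≤ d ∧ p = z d i}) := by
  rw [D1_eq]
  constructor
  · intro hDf
    obtain ⟨s, hmem⟩ := L6 d hd f
    refine ⟨s, ?_⟩
    -- rewrite membership as image of aeval (w d)
    rw [Rbig, Algebra.adjoin_range_eq_range_aeval, AlgHom.mem_range] at hmem
    obtain ⟨Q, hQ⟩ := hmem
    have hDg : Der d ((X 0 : MvPolynomial (Fin (d+1)) ℂ)^s * f) = 0 := by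
      rw [Derivation.leibniz, hDf, smul_zero, Der_X0_pow, smul_zero, add_zero]
    have hchain : (X 0 : MvPolynomial (Fin (d+1)) ℂ) * aeval (w d) (pderiv 1 Q) = 0 := by
      rw [← chain d hd Q, hQ, hDg]
    have hav : aeval (w d) (pderiv 1 Q) = 0 := by
      rcases mul_eq_zero.mp hchain with h' | h'
      · exact absurd h' (X_ne_zero 0)
      · exact h'
    have hpd : pderiv (1 : Fin (d+1)) Q = 0 := by
      apply waeval_inj d hd
      rw [hav, map_zero]
    have hsupp := supported_of_pderiv_zero (1 : Fin (d+1)) Q hpd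
    rw [supported_eq_range_rename, AlgHom.mem_range] at hsupp
    obtain ⟨Q', hQ'⟩ := hsupp
    have hg : (X 0 : MvPolynomial (Fin (d+1)) ℂ)^s * f
        = aeval (w d ∘ Subtype.val) Q' := by
      rw [← hQ, ← hQ', aeval_rename]
    rw [hg]
    have hmem2 : aeval (w d ∘ Subtype.val) Q'
        ∈ Algebra.adjoin ℂ (Set.range (w d ∘ (Subtype.val :
          {x // x ∈ ({j : Fin (d+1) | j ≠ 1} : Set (Fin (d+1)))} → Fin (d+1)))) := by
      rw [Algebra.adjoin_range_eq_range_aeval]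
      exact ⟨Q', rfl⟩
    refine Algebra.adjoin_mono ?_ hmem2
    rintro x ⟨⟨iv, hiv⟩, rfl⟩
    simp only [Function.comp_apply]
    rcases lt_or_ge (iv:ℕ) 2 with h | h
    · have : (iv:ℕ) = 0 ∨ (iv:ℕ) = 1 := by omega
      rcases this with hi | hi
      · have hi0 : iv = 0 := by ext; simpa using hi
        subst hi0
        rw [w_zero]
        exact Or.inl rfl
      · exact absurd (Fin.ext (hi.trans (val_one' d hd).symm)) hiv
    · rw [w_of_ge d iv h]
      exact Or.inr ⟨(iv:ℕ), h, by omega, rfl⟩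
  · rintro ⟨s, hmem⟩
    have h0 : Der d ((X 0 : MvPolynomial (Fin (d+1)) ℂ)^s * f) = 0 :=
      Der_zero_of_mem d hd hmem
    rw [Derivation.leibniz, Der_X0_pow, smul_zero, add_zero, smul_eq_mul] at h0
    have hX : (X 0 : MvPolynomial (Fin (d+1)) ℂ)^s ≠ 0 := pow_ne_zero _ (X_ne_zero 0)
    rcases mul_eq_zero.mp h0 with h' | h'
    · exact absurd h' hX
    · exact h'
end
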